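/- Let G be the structure group of a finite RC-quasigroup (X, ⊳) of class p, and W = G/≡ the finite quotient of order pⁿ. Then a presentation of W is obtained by adding to the presentation ⟨X | x(x⊳y) = y(y⊳x)⟩ of G the n relations w_x = 1 for x ∈ X, where w_x = x · (x⊳x) · ((x⊳x)⊳(x⊳x)) ⋯ is the length-p word whose letters are the iterates of y ↦ y ⊳ y starting at x. -/

import Mathlib

/-- `PiAux op l y` is `Π_{r+1}(x₁, ..., x_r, y)` where `l = [x_r, ..., x₁]`. -/
def PiAux {X : Type*} (op : X → X → X) : List X → X → X
  | [], y => y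
  | a :: l, y => op (PiAux op l a) (PiAux op l y)

/-- `SigmaRev op l` is the list of letters of the word `Σ_r(x₁, ..., x_r)` for
`l = [x_r, ..., x₁]` the reversed argument list. -/
def SigmaRev {X : Type*} (op : X → X → X) : List X → List X
  | [] => []
  | a :: l => SigmaRev op l ++ [PiAux op l a]

/-- The relators `x(x ⊳ y)(y(y ⊳ x))⁻¹` presenting the structure group of `(X, ⊳)`. -/
def structGroupRels {X : Type*} (op : X → X → X) : Set (FreeGroup X) :=
  { r | ∃ x y : X, r = FreeGroup.of x * FreeGroup.of (op x y)
      * (FreeGroup.of y * FreeGroup.of (op y x))⁻¹ }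

section aux
variable {X : Type*} (op : X → X → X)

lemma piAux_swap (hRC : ∀ x y z : X, op (op x y) (op x z) = op (op y x) (op y z))
    (a b : X) (l : List X) (y : X) :
    PiAux op (a :: b :: l) y = PiAux op (b :: a :: l) y := by
  simp only [PiAux]
  exact hRC _ _ _

lemma piAux_rotate (hRC : ∀ x y z : X, op (op x y) (op x z) = op (op y x) (op y z))
    (y : X) (l : List X) : ∀ a : X, PiAux op (y :: l) a = PiAux op (l ++ [y]) a := by
  induction l with
  | nil => intro a; rfl
  | cons c m ih =>
      intro a
      rw [piAux_swap op hRC]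
      show op (PiAux op (y :: m) c) (PiAux op (y :: m) a) = _
      rw [ih c, ih a]
      rfl

lemma piAux_replicate (x : X) : ∀ k : ℕ,
    PiAux op (List.replicate k x) x = (fun y => op y y)^[k] x := by
  intro k
  induction k with
  | zero => rfl
  | succ k ih =>
      rw [List.replicate_succ]
      show op (PiAux op (List.replicate k x) x) (PiAux op (List.replicate k x) x) = _
      rw [ih, Function.iterate_succ_apply']

lemma piAux_replicate_append (x y : X) : ∀ k : ℕ,
    PiAux op (List.replicate k x ++ [y]) x = (fun z => op z z)^[k] (op y x) := by
  intro k
  induction k with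
  | zero => rfl
  | succ k ih =>
      rw [List.replicate_succ, List.cons_append]
      show op (PiAux op (List.replicate k x ++ [y]) x) (PiAux op (List.replicate k x ++ [y]) x) = _
      rw [ih, Function.iterate_succ_apply']

lemma sigmaRev_replicate (x : X) : ∀ k : ℕ,
    SigmaRev op (List.replicate k x) = (List.range k).map (fun j => (fun y => op y y)^[j] x) := by
  intro k
  induction k with
  | zero => rfl
  | succ k ih =>
      rw [List.replicate_succ]
      show SigmaRev op (List.replicate k x) ++ [PiAux op (List.replicate k x) x] = _
      rw [ih, piAux_replicate, List.range_succ, List.map_append]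
      rfl

lemma sigmaRev_replicate_append (x y : X) : ∀ k : ℕ,
    SigmaRev op (List.replicate k x ++ [y])
      = y :: (List.range k).map (fun j => (fun z => op z z)^[j] (op y x)) := by
  intro k
  induction k with
  | zero => rfl
  | succ k ih =>
      rw [List.replicate_succ, List.cons_append]
      show SigmaRev op (List.replicate k x ++ [y])
          ++ [PiAux op (List.replicate k x ++ [y]) x] = _
      rw [ih, piAux_replicate_append, List.range_succ, List.map_append]
      rfl

/-- product of the images of the letters of `SigmaRev op l` in the presented group. -/
noncomputable def sigmaG (l : List X) : PresentedGroup (structGroupRels op) :=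
  ((SigmaRev op l).map PresentedGroup.of).prod

lemma sigmaG_cons (a : X) (l : List X) :
    sigmaG op (a :: l) = sigmaG op l * PresentedGroup.of (PiAux op l a) := by
  simp [sigmaG, SigmaRev]

lemma presented_rel (u v : X) :
    (PresentedGroup.of u : PresentedGroup (structGroupRels op)) * PresentedGroup.of (op u v)
      = PresentedGroup.of v * PresentedGroup.of (op v u) := by
  have hmem : FreeGroup.of u * FreeGroup.of (op u v)
      * (FreeGroup.of v * FreeGroup.of (op v u))⁻¹ ∈ structGroupRels op := ⟨u, v, rfl⟩
  have h1 : (PresentedGroup.mk (structGroupRels op))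
      (FreeGroup.of u * FreeGroup.of (op u v)
        * (FreeGroup.of v * FreeGroup.of (op v u))⁻¹) = 1 := by
    apply (QuotientGroup.eq_one_iff _).2
    exact Subgroup.subset_normalClosure hmem
  have := h1
  rw [map_mul, map_inv, map_mul, map_mul] at this
  exact mul_inv_eq_one.mp this

lemma sigmaG_swap (hRC : ∀ x y z : X, op (op x y) (op x z) = op (op y x) (op y z))
    (a b : X) (l : List X) :
    sigmaG op (a :: b :: l) = sigmaG op (b :: a :: l) := by
  rw [sigmaG_cons, sigmaG_cons, sigmaG_cons, sigmaG_cons]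
  show sigmaG op l * PresentedGroup.of (PiAux op l b)
        * PresentedGroup.of (op (PiAux op l b) (PiAux op l a))
      = sigmaG op l * PresentedGroup.of (PiAux op l a)
        * PresentedGroup.of (op (PiAux op l a) (PiAux op l b))
  rw [mul_assoc, mul_assoc, presented_rel]

lemma sigmaG_rotate (hRC : ∀ x y z : X, op (op x y) (op x z) = op (op y x) (op y z))
    (y : X) (l : List X) : sigmaG op (y :: l) = sigmaG op (l ++ [y]) := by
  induction l with
  | nil => rfl
  | cons c m ih =>
      rw [sigmaG_swap op hRC, sigmaG_cons, ih, piAux_rotate op hRC, List.cons_append,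
        ← sigmaG_cons]

end aux

section main
variable {X : Type*} (op : X → X → X)

lemma w_eq (p : ℕ) (x : X) :
    sigmaG op (List.replicate p x)
      = ((List.range p).map (fun k =>
          PresentedGroup.of (rels := structGroupRels op) ((fun y => op y y)^[k] x))).prod := by
  unfold sigmaG
  rw [sigmaRev_replicate, List.map_map]
  rfl

lemma conj_w (hRC : ∀ x y z : X, op (op x y) (op x z) = op (op y x) (op y z))
    (p : ℕ) (hclass : ∀ x y : X, PiAux op (List.replicate p x) y = y) (x y : X) :
    sigmaG op (List.replicate p x) * PresentedGroup.of y
      = PresentedGroup.of y * sigmaG op (List.replicate p (op y x)) := by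
  conv_lhs => rw [show (PresentedGroup.of y : PresentedGroup (structGroupRels op))
      = PresentedGroup.of (PiAux op (List.replicate p x) y) by rw [hclass]]
  rw [← sigmaG_cons, sigmaG_rotate op hRC]
  show ((SigmaRev op (List.replicate p x ++ [y])).map PresentedGroup.of).prod = _
  rw [sigmaRev_replicate_append, List.map_cons, List.prod_cons]
  congr 1
  unfold sigmaG
  rw [sigmaRev_replicate]

end main


/-- let `G` be the structure group of an RC-quasigroup `(X, ⊳)` of size `n`
and class `p`, and `W = G/≡` the quotient of `G` by the subgroup generated by the elements
`x^{[p]}`, i.e. by the images of the length-`p` words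
`w_x = x·(x⊳x)·((x⊳x)⊳(x⊳x))⋯` (letters the iterates of `y ↦ y ⊳ y` starting at `x`).
Then the subgroup generated by the `w_x` equals their normal closure, and `W` is presented by
adding the `n` relations `w_x = 1` to the presentation `⟨X ∣ x(x⊳y) = y(y⊳x)⟩` of `G`. -/
theorem stmt17 {X : Type*} [Fintype X] [DecidableEq X] (op : X → X → X)
    (hRC : ∀ x y z : X, op (op x y) (op x z) = op (op y x) (op y z))
    (hL : ∀ x : X, Function.Bijective (op x))
    (p : ℕ) (hp : 0 < p)
    (hclass : ∀ x y : X, PiAux op (List.replicate p x) y = y) :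
    Subgroup.normalClosure
        {g : PresentedGroup (structGroupRels op) | ∃ x : X,
          g = ((List.range p).map (fun k =>
            PresentedGroup.of (rels := structGroupRels op) ((fun y => op y y)^[k] x))).prod}
      = Subgroup.closure
        {g : PresentedGroup (structGroupRels op) | ∃ x : X,
          g = ((List.range p).map (fun k =>
            PresentedGroup.of (rels := structGroupRels op) ((fun y => op y y)^[k] x))).prod} ∧
    Nonempty ((PresentedGroup (structGroupRels op) ⧸ Subgroup.normalClosure
        {g : PresentedGroup (structGroupRels op) | ∃ x : X,
          g = ((List.range p).map (fun k =>
            PresentedGroup.of (rels := structGroupRels op) ((fun y => op y y)^[k] x))).prod})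
      ≃* PresentedGroup (structGroupRels op ∪
        {r : FreeGroup X | ∃ x : X,
          r = ((List.range p).map (fun k => FreeGroup.of ((fun y => op y y)^[k] x))).prod})) := by
  set S : Set (PresentedGroup (structGroupRels op)) :=
    {g | ∃ x : X, g = ((List.range p).map (fun k =>
      PresentedGroup.of (rels := structGroupRels op) ((fun y => op y y)^[k] x))).prod}
    with hSdef
  have hSw : S = {g | ∃ x : X, g = sigmaG op (List.replicate p x)} := by
    rw [hSdef]; ext g
    simp only [Set.mem_setOf_eq]
    constructor
    · rintro ⟨x, rfl⟩; exact ⟨x, (w_eq op p x).symm⟩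
    · rintro ⟨x, rfl⟩; exact ⟨x, w_eq op p x⟩
  have himg : ∀ y : X,
      ⇑(MulAut.conj (PresentedGroup.of (rels := structGroupRels op) y)).toMonoidHom '' S = S := by
    intro y
    rw [hSw]
    ext g
    simp only [Set.mem_image, Set.mem_setOf_eq, MulEquiv.coe_toMonoidHom, MulAut.conj_apply]
    constructor
    · rintro ⟨s, ⟨z, rfl⟩, rfl⟩
      obtain ⟨x, rfl⟩ := (hL y).2 z
      refine ⟨x, ?_⟩
      rw [← conj_w op hRC p hclass x y]
      group
    · rintro ⟨x, rfl⟩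
      refine ⟨sigmaG op (List.replicate p (op y x)), ⟨op y x, rfl⟩, ?_⟩
      rw [← conj_w op hRC p hclass x y]
      group
  have hmap : ∀ y : X, (Subgroup.closure S).map
      (MulAut.conj (PresentedGroup.of (rels := structGroupRels op) y)).toMonoidHom
      = Subgroup.closure S := by
    intro y
    rw [MonoidHom.map_closure, himg y]
  have hnorm : (Subgroup.closure S).Normal := by
    rw [← Subgroup.normalizer_eq_top_iff, eq_top_iff]
    intro g _
    refine PresentedGroup.generated_by _ _ (fun j => ?_) g
    rw [Subgroup.mem_normalizer_iff]
    intro h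
    constructor
    · intro hh
      have h2 := Subgroup.mem_map_of_mem
        (MulAut.conj (PresentedGroup.of (rels := structGroupRels op) j)).toMonoidHom hh
      rw [hmap j] at h2
      simpa [MulAut.conj_apply] using h2
    · intro hh
      have h2 : (MulAut.conj (PresentedGroup.of (rels := structGroupRels op) j)).toMonoidHom h
          ∈ (Subgroup.closure S).map
            (MulAut.conj (PresentedGroup.of (rels := structGroupRels op) j)).toMonoidHom := by
        rw [hmap j]
        simpa [MulAut.conj_apply] using hh
      obtain ⟨h', hh', heq⟩ := h2
      have hh'' : h' = h :=
        (MulAut.conj (PresentedGroup.of (rels := structGroupRels op) j)).injective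
          (by simpa using heq)
      rwa [← hh'']
  haveI := hnorm
  constructor
  · exact le_antisymm (Subgroup.normalClosure_le_normal Subgroup.subset_closure)
      ((Subgroup.closure_le _).mpr Subgroup.subset_normalClosure)
  · set S' : Set (FreeGroup X) := {r | ∃ x : X,
      r = ((List.range p).map (fun k => FreeGroup.of ((fun y => op y y)^[k] x))).prod}
      with hS'def
    have hle : Subgroup.normalClosure (structGroupRels op)
        ≤ Subgroup.normalClosure (structGroupRels op ∪ S') :=
      Subgroup.normalClosure_mono Set.subset_union_left
    have hNmap : (Subgroup.normalClosure (structGroupRels op ∪ S')).map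
        (QuotientGroup.mk' (Subgroup.normalClosure (structGroupRels op)))
        = Subgroup.normalClosure S := by
      rw [Subgroup.map_normalClosure _ _ (QuotientGroup.mk'_surjective _), Set.image_union]
      have himR : ((QuotientGroup.mk' (Subgroup.normalClosure (structGroupRels op)))
          '' structGroupRels op : Set (PresentedGroup (structGroupRels op)))
          ⊆ ↑(Subgroup.normalClosure S) := by
        rintro g ⟨r, hr, rfl⟩
        have h1 : (QuotientGroup.mk' (Subgroup.normalClosure (structGroupRels op))) r = 1 :=
          (QuotientGroup.eq_one_iff _).2 (Subgroup.subset_normalClosure hr)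
        rw [h1]
        exact Subgroup.one_mem _
      have himS : (QuotientGroup.mk' (Subgroup.normalClosure (structGroupRels op))) '' S' = S := by
        rw [hS'def, hSdef]
        ext g
        simp only [Set.mem_image, Set.mem_setOf_eq]
        constructor
        · rintro ⟨r, ⟨x, rfl⟩, rfl⟩
          exact ⟨x, by rw [map_list_prod, List.map_map]; rfl⟩
        · rintro ⟨x, rfl⟩
          exact ⟨_, ⟨x, rfl⟩, by rw [map_list_prod, List.map_map]; rfl⟩
      rw [himS]
      exact le_antisymm
        (by haveI : (Subgroup.normalClosure S).Normal := Subgroup.normalClosure_normal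
            exact @Subgroup.normalClosure_le_normal _ _ _ _ Subgroup.normalClosure_normal
              (Set.union_subset himR Subgroup.subset_normalClosure))
        (Subgroup.normalClosure_mono Set.subset_union_right)
    refine ⟨?_⟩
    have e := QuotientGroup.quotientQuotientEquivQuotient
      (Subgroup.normalClosure (structGroupRels op))
      (Subgroup.normalClosure (structGroupRels op ∪ S')) hle
    haveI : (Subgroup.map (QuotientGroup.mk' (Subgroup.normalClosure (structGroupRels op)))
        (Subgroup.normalClosure (structGroupRels op ∪ S'))).Normal := by
      rw [hNmap]; exact Subgroup.normalClosure_normal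
    haveI h2 : @Subgroup.Normal (PresentedGroup (structGroupRels op)) _
        (Subgroup.map (QuotientGroup.mk' (Subgroup.normalClosure (structGroupRels op)))
          (Subgroup.normalClosure (structGroupRels op ∪ S'))) := this
    exact (@QuotientGroup.quotientMulEquivOfEq (PresentedGroup (structGroupRels op)) _ _ _ Subgroup.normalClosure_normal h2 hNmap.symm).trans e
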